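/- Let Γ be a connected k-regular bipartite graph whose adjacency matrix has exactly four distinct eigenvalues. If Γ has a full indubitable partition corresponding to an eigenvalue λ ≠ −k with multiplicity m, then Γ is isomorphic to the bipartite double of the complete graph K_{m+1}; that is, the adjacency matrix of Γ is permutation-similar to (J₂ − I₂) ⊗ (J_{m+1} − I_{m+1}). -/

import Mathlib

open Matrix Finset Kronecker SimpleGraph

/-- The all-ones matrix `J`. -/
def matJ (α β : Type*) : Matrix α β ℝ := Matrix.of fun _ _ => 1

/-- Hadamard (entrywise) powers of a matrix; the 0-th power is the all-ones matrix `J`. -/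
def hadPow {V : Type*} (E : Matrix V V ℝ) : ℕ → Matrix V V ℝ
  | 0 => matJ V V
  | n + 1 => Matrix.hadamard E (hadPow E n)

/-- The idempotent `∘`-algebra `⟨J, E⟩∘`: the linear span over `ℝ` of `J` together with all
Hadamard powers `E, E∘E, E∘E∘E, …` of `E`. -/
noncomputable def hadSpan {V : Type*} (E : Matrix V V ℝ) : Submodule ℝ (Matrix V V ℝ) :=
  Submodule.span ℝ (Set.range (hadPow E))

/-- The adjacency algebra of a graph with adjacency matrix `A`:
the linear span over `ℝ` of the powers `I, A, A², …` of `A`. -/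
noncomputable def adjAlg {V : Type*} [Fintype V] [DecidableEq V] (A : Matrix V V ℝ) :
    Submodule ℝ (Matrix V V ℝ) :=
  Submodule.span ℝ (Set.range fun n : ℕ => A ^ n)

/-- `A` and `B` are permutation-similar: `B = PᵀAP` for a permutation matrix `P`,
i.e. `A` can be obtained from `B` by simultaneous re-indexing of rows and columns
along a bijection of the index types. -/
def PermSimilar {α β : Type*} (A : Matrix α α ℝ) (B : Matrix β β ℝ) : Prop :=
  ∃ e : α ≃ β, ∀ i j, A i j = B (e i) (e j)

/-- The multiplicity of `μ` as an eigenvalue of the square matrix `A`, i.e. the dimension of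
the eigenspace `ker (μ•I − A)`. -/
noncomputable def eigMult {V : Type*} [Fintype V] [DecidableEq V]
    (A : Matrix V V ℝ) (μ : ℝ) : ℕ :=
  Module.finrank ℝ (LinearMap.ker (Matrix.toLin' (μ • (1 : Matrix V V ℝ) - A)))

/-- `E` is the spectral idempotent of `A` for the eigenvalue `μ`: the real symmetric matrix
with `E² = E`, `A·E = μ·E`, and `rank E = dim ker (μI − A)`; equivalently, the matrix of the
orthogonal projection onto the eigenspace `ker (μI − A)`. -/
def IsSpectralIdempotent {V : Type*} [Fintype V] [DecidableEq V]
    (A E : Matrix V V ℝ) (μ : ℝ) : Prop :=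
  E.IsSymm ∧ E * E = E ∧ A * E = μ • E ∧ E.rank = eigMult A μ

open Classical in
/-- The map `c` describes an indubitable partition of `G` with parameters `(a, b)`:
the cells of the partition are the fibers of `c`, and for each cell `P` and each vertex `x`
the number of neighbors of `x` in `P` equals `a` if `x ∈ P` and `b` otherwise. -/
def IsIndubitable {V ι : Type*} (G : SimpleGraph V) (c : V → ι) (a b : ℕ) : Prop :=
  Function.Surjective c ∧
    ∀ (i : ι) (x : V), {y : V | G.Adj x y ∧ c y = i}.ncard = if c x = i then a else b

/-- `G` has a full indubitable partition corresponding to the eigenvalue `μ` of multiplicity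
`m`: an indubitable partition with `m + 1` cells and parameters `(a, b)` with `a − b = μ`. -/
def HasFullIndubitable {V : Type*} (G : SimpleGraph V) (μ : ℝ) (m : ℕ) : Prop :=
  ∃ (c : V → Fin (m + 1)) (a b : ℕ), IsIndubitable G c a b ∧ (a : ℝ) - (b : ℝ) = μ

instance {α β : Type*} [DecidableEq α] [DecidableEq β] (G : SimpleGraph α) (H : SimpleGraph β)
    [DecidableRel G.Adj] [DecidableRel H.Adj] : DecidableRel (G □ H).Adj := fun x y =>
  inferInstanceAs (Decidable ((G.Adj x.1 y.1 ∧ x.2 = y.2) ∨ (H.Adj x.2 y.2 ∧ x.1 = y.1)))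

section AuxiliaryLemmas
set_option linter.unusedSectionVars false


variable {n : Type*} [Fintype n] [DecidableEq n]

lemma mem_eigker_iff (A : Matrix n n ℝ) (μ : ℝ) (u : n → ℝ) :
    u ∈ LinearMap.ker (Matrix.toLin' (μ • (1 : Matrix n n ℝ) - A)) ↔ A *ᵥ u = μ • u := by
  rw [LinearMap.mem_ker, Matrix.toLin'_apply, sub_mulVec, smul_mulVec, one_mulVec,
    sub_eq_zero, eq_comm]

lemma eigMult_eq_card (A : Matrix n n ℝ) (hA : A.IsHermitian) (μ : ℝ) :
    eigMult A μ = (Finset.univ.filter fun i => hA.eigenvalues i = μ).card := by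
  classical
  set U : Matrix n n ℝ := (hA.eigenvectorUnitary : Matrix n n ℝ) with hU
  have hUU : U * star U = 1 := Matrix.mem_unitaryGroup_iff.mp hA.eigenvectorUnitary.2
  have hUU' : star U * U = 1 := Matrix.mem_unitaryGroup_iff'.mp hA.eigenvectorUnitary.2
  have hdU : IsUnit U.det := by
    apply IsUnit.of_mul_eq_one (star U).det
    rw [← det_mul, hUU, det_one]
  have hdU' : IsUnit (star U).det := by
    apply IsUnit.of_mul_eq_one U.det
    rw [← det_mul, hUU', det_one]
  have hspec : A = U * diagonal hA.eigenvalues * star U := by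
    have := hA.spectral_theorem
    simpa using this
  have hM : μ • (1 : Matrix n n ℝ) - A = U * diagonal (fun i => μ - hA.eigenvalues i) * star U := by
    have hd : (diagonal (fun i => μ - hA.eigenvalues i) : Matrix n n ℝ)
        = μ • 1 - diagonal hA.eigenvalues := by
      ext i j
      by_cases h : i = j <;> simp [h, Matrix.diagonal_apply, Matrix.one_apply]
    rw [hd, Matrix.mul_sub, Matrix.sub_mul, ← hspec,
      mul_smul_comm, smul_mul_assoc, mul_one, hUU]
  -- rank of M equals number of nonzero entries of the diagonal
  have hrank : (μ • (1 : Matrix n n ℝ) - A).rank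
      = (Finset.univ.filter fun i => hA.eigenvalues i ≠ μ).card := by
    rw [hM, Matrix.rank_mul_eq_left_of_isUnit_det _ _ hdU',
      Matrix.rank_mul_eq_right_of_isUnit_det _ _ hdU, Matrix.rank_diagonal,
      Fintype.card_subtype]
    congr 1
    ext i
    simp only [ne_eq, sub_eq_zero, Finset.mem_filter, Finset.mem_univ, true_and]
    exact not_congr ⟨fun h => h.symm, fun h => h.symm⟩
  -- rank-nullity
  have hrn := LinearMap.finrank_range_add_finrank_ker
    (Matrix.toLin' (μ • (1 : Matrix n n ℝ) - A))
  have hker : eigMult A μ + (μ • (1 : Matrix n n ℝ) - A).rank = Fintype.card n := by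
    rw [Matrix.rank]
    have : (μ • (1 : Matrix n n ℝ) - A).mulVecLin = Matrix.toLin' (μ • (1 : Matrix n n ℝ) - A) :=
      LinearMap.ext fun u => by rw [Matrix.toLin'_apply, Matrix.mulVecLin_apply]
    rw [this, eigMult, add_comm]
    simpa [Module.finrank_pi] using hrn
  have hsplit : (Finset.univ.filter fun i => hA.eigenvalues i = μ).card
      + (Finset.univ.filter fun i => hA.eigenvalues i ≠ μ).card = Fintype.card n := by
    rw [Finset.card_filter_add_card_filter_not]
    rfl
  omega

lemma eigMult_pos_of_eigvec (A : Matrix n n ℝ) {μ : ℝ} {u : n → ℝ} (hu : u ≠ 0)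
    (h : A *ᵥ u = μ • u) : 0 < eigMult A μ := by
  rw [eigMult, Module.finrank_pos_iff_exists_ne_zero]
  exact ⟨⟨u, (mem_eigker_iff A μ u).mpr h⟩, by simpa using hu⟩

lemma exists_eigvec_of_eigMult_pos (A : Matrix n n ℝ) {μ : ℝ} (h : 0 < eigMult A μ) :
    ∃ u : n → ℝ, u ≠ 0 ∧ A *ᵥ u = μ • u := by
  rw [eigMult, Module.finrank_pos_iff_exists_ne_zero] at h
  obtain ⟨⟨u, hu⟩, hne⟩ := h
  exact ⟨u, by simpa using hne, (mem_eigker_iff A μ u).mp hu⟩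

lemma eig_set_eq (A : Matrix n n ℝ) (hA : A.IsHermitian) :
    {μ : ℝ | 0 < eigMult A μ} = ↑(Finset.image hA.eigenvalues Finset.univ) := by
  ext μ
  simp only [Set.mem_setOf_eq, Finset.coe_image, Set.mem_image, Finset.mem_coe,
    Finset.mem_univ, true_and, eigMult_eq_card A hA, Finset.card_pos]
  rw [Finset.filter_nonempty_iff]
  constructor
  · rintro ⟨i, _, hi⟩; exact ⟨i, hi⟩
  · rintro ⟨i, hi⟩; exact ⟨i, Finset.mem_univ i, hi⟩

lemma card_eq_sum_eigMult (A : Matrix n n ℝ) (hA : A.IsHermitian) :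
    Fintype.card n = ∑ μ ∈ Finset.image hA.eigenvalues Finset.univ, eigMult A μ := by
  rw [← Finset.card_univ,
    Finset.card_eq_sum_card_fiberwise (f := hA.eigenvalues)
      (t := Finset.image hA.eigenvalues Finset.univ)
      (fun x _ => Finset.mem_image_of_mem _ (Finset.mem_univ x))]
  exact Finset.sum_congr rfl fun μ _ => (eigMult_eq_card A hA μ).symm

/-- a "sign vector" conjugation shows the spectrum is symmetric. -/
lemma key_sign (A : Matrix n n ℝ) (s : n → ℝ)
    (hs : ∀ i j, A i j ≠ 0 → s j = -s i) {μ : ℝ} {u : n → ℝ}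
    (h : A *ᵥ u = μ • u) : A *ᵥ (s * u) = (-μ) • (s * u) := by
  funext i
  have : ∀ j, A i j * (s j * u j) = (-s i) * (A i j * u j) := by
    intro j
    by_cases hA0 : A i j = 0
    · simp [hA0]
    · rw [hs i j hA0]; ring
  calc (A *ᵥ (s * u)) i = ∑ j, A i j * (s j * u j) := by
        simp [Matrix.mulVec, dotProduct, Pi.mul_apply]
    _ = ∑ j, (-s i) * (A i j * u j) := by
        exact Finset.sum_congr rfl fun j _ => this j
    _ = (-s i) * (A *ᵥ u) i := by
        rw [← Finset.mul_sum]; rfl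
    _ = ((-μ) • (s * u)) i := by
        rw [h]; simp [Pi.smul_apply, Pi.mul_apply]; ring

/-- multiplication by a sign vector as a linear map. -/
def mulSign (s : n → ℝ) : (n → ℝ) →ₗ[ℝ] (n → ℝ) where
  toFun u := s * u
  map_add' u v := by funext i; simp [Pi.mul_apply]; ring
  map_smul' c u := by funext i; simp [Pi.mul_apply]; ring

lemma eigMult_neg_eq (A : Matrix n n ℝ) (s : n → ℝ) (hs1 : ∀ i, s i * s i = 1)
    (hs : ∀ i j, A i j ≠ 0 → s j = -s i) (μ : ℝ) : eigMult A (-μ) = eigMult A μ := by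
  have hinv : ∀ u : n → ℝ, s * (s * u) = u := by
    intro u; funext i; simp only [Pi.mul_apply, ← mul_assoc, hs1 i, one_mul]
  let e : (n → ℝ) ≃ₗ[ℝ] (n → ℝ) :=
    LinearEquiv.ofLinear (mulSign s) (mulSign s)
      (LinearMap.ext fun u => hinv u) (LinearMap.ext fun u => hinv u)
  have hmap : (LinearMap.ker (Matrix.toLin' (μ • (1 : Matrix n n ℝ) - A))).map
      (e : (n → ℝ) →ₗ[ℝ] (n → ℝ))
      = LinearMap.ker (Matrix.toLin' ((-μ) • (1 : Matrix n n ℝ) - A)) := by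
    apply le_antisymm
    · rintro x hx
      rw [Submodule.mem_map] at hx
      obtain ⟨u, hu, rfl⟩ := hx
      rw [mem_eigker_iff] at hu
      show (s * u) ∈ LinearMap.ker (Matrix.toLin' ((-μ) • (1 : Matrix n n ℝ) - A))
      rw [mem_eigker_iff]
      exact key_sign A s hs hu
    · intro u hu
      rw [mem_eigker_iff] at hu
      rw [Submodule.mem_map]
      refine ⟨s * u, ?_, hinv u⟩
      rw [mem_eigker_iff]
      simpa using key_sign A s hs hu
  rw [eigMult, eigMult, ← hmap, LinearEquiv.finrank_map_eq]

section GraphLemmas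
variable {V : Type*} [Fintype V] [DecidableEq V] (G : SimpleGraph V) [DecidableRel G.Adj]

/-- properties preserved along edges are preserved along reachability. -/
lemma reachable_pres (P : V → Prop) (h : ∀ x y, G.Adj x y → P x → P y)
    {x y : V} (hr : G.Reachable x y) (hx : P x) : P y := by
  obtain ⟨w⟩ := hr
  induction w with
  | nil => exact hx
  | cons hadj _ ih => exact ih (h _ _ hadj hx)

/-- An eigenvector of a connected regular graph for the top eigenvalue is constant. -/
lemma eigvec_top_const (hconn : G.Connected) {k : ℕ} (hreg : G.IsRegularOfDegree k)
    {u : V → ℝ} (hu : (G.adjMatrix ℝ) *ᵥ u = (k : ℝ) • u) (x y : V) : u x = u y := by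
  have hne : Nonempty V := hconn.nonempty
  obtain ⟨x₀, -, hx₀⟩ := Finset.exists_max_image (Finset.univ : Finset V) u ⟨Classical.arbitrary V, Finset.mem_univ _⟩
  set M := u x₀ with hM
  have hstep : ∀ p q : V, G.Adj p q → u p = M → u q = M := by
    intro p q hpq hp
    by_contra hq
    have hqlt : u q < M := lt_of_le_of_ne (hx₀ q (Finset.mem_univ q)) hq
    have hsum : ∑ z ∈ G.neighborFinset p, u z = (k : ℝ) * M := by
      have := congrFun hu p
      rw [SimpleGraph.adjMatrix_mulVec_apply] at this
      rw [this, Pi.smul_apply, hp, smul_eq_mul]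
    have hlt : ∑ z ∈ G.neighborFinset p, u z < ∑ z ∈ G.neighborFinset p, M := by
      apply Finset.sum_lt_sum (fun z _ => hx₀ z (Finset.mem_univ z))
      exact ⟨q, (G.mem_neighborFinset p q).mpr hpq, hqlt⟩
    rw [Finset.sum_const, show #(G.neighborFinset p) = k from hreg p, hsum,
      nsmul_eq_mul] at hlt
    exact lt_irrefl _ hlt
  have hall : ∀ z : V, u z = M :=
    fun z => reachable_pres G (fun w => u w = M) hstep (hconn x₀ z) rfl
  rw [hall x, hall y]

lemma adjMatrix_mulVec_one {k : ℕ} (hreg : G.IsRegularOfDegree k) :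
    (G.adjMatrix ℝ) *ᵥ (fun _ => (1 : ℝ)) = (k : ℝ) • (fun _ => (1 : ℝ)) := by
  funext x
  rw [SimpleGraph.adjMatrix_mulVec_apply]
  simp [hreg x]

end GraphLemmas


section Perron
variable {V : Type*} [Fintype V] [DecidableEq V] (G : SimpleGraph V) [DecidableRel G.Adj]

lemma eigMult_top_eq_one (hconn : G.Connected) {k : ℕ} (hreg : G.IsRegularOfDegree k) :
    eigMult (G.adjMatrix ℝ) k = 1 := by
  have hne : Nonempty V := hconn.nonempty
  have hone : (fun _ => (1 : ℝ) : V → ℝ) ≠ 0 := by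
    intro h
    have := congrFun h (Classical.arbitrary V)
    norm_num at this
  have hker : LinearMap.ker (Matrix.toLin' ((k : ℝ) • (1 : Matrix V V ℝ) - G.adjMatrix ℝ))
      = Submodule.span ℝ {(fun _ => (1 : ℝ) : V → ℝ)} := by
    apply le_antisymm
    · intro u hu
      rw [mem_eigker_iff] at hu
      have hconst := eigvec_top_const G hconn hreg hu
      rw [Submodule.mem_span_singleton]
      refine ⟨u (Classical.arbitrary V), ?_⟩
      funext z
      simp [hconst (Classical.arbitrary V) z]
    · rw [Submodule.span_le, Set.singleton_subset_iff]
      rw [SetLike.mem_coe, mem_eigker_iff]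
      exact adjMatrix_mulVec_one G hreg
  rw [eigMult, hker, finrank_span_singleton hone]

end Perron

end AuxiliaryLemmas

/-- Corollary rE. Let `Γ` be a connected `k`-regular bipartite graph with
exactly four distinct eigenvalues. If `Γ` has a full indubitable partition corresponding to an
eigenvalue `λ ≠ −k` of multiplicity `m`, then `Γ` is the bipartite double of `K_{m+1}`: its
adjacency matrix is permutation-similar to `(J₂ − I₂) ⊗ (J_{m+1} − I_{m+1})`. -/
theorem statement17 (v k m : ℕ) (G : SimpleGraph (Fin v)) [DecidableRel G.Adj]
    (hconn : G.Connected) (hreg : G.IsRegularOfDegree k) (hbip : G.Colorable 2)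
    (h4 : {mu : ℝ | 0 < eigMult (G.adjMatrix ℝ) mu}.ncard = 4)
    (lam : ℝ) (hlam : lam ≠ -(k : ℝ))
    (hm : eigMult (G.adjMatrix ℝ) lam = m) (hm0 : 0 < m)
    (hfull : HasFullIndubitable G lam m) :
    PermSimilar (G.adjMatrix ℝ)
      ((matJ (Fin 2) (Fin 2) - 1) ⊗ₖ (matJ (Fin (m + 1)) (Fin (m + 1)) - 1)) := by
    classical
  obtain ⟨c, a, b, ⟨hcsurj, hcnt⟩, hab⟩ := hfull
  set A : Matrix (Fin v) (Fin v) ℝ := G.adjMatrix ℝ with hAdef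
  have hA : A.IsHermitian := by
    ext i j
    simp [hAdef, Matrix.conjTranspose_apply, SimpleGraph.adjMatrix_apply, G.adj_comm]
  -- the coloring
  let C : G.Coloring (Fin 2) := hbip.some
  let col : Fin v → Fin 2 := fun x => C x
  have hcol : ∀ {x y : Fin v}, G.Adj x y → col x ≠ col y := fun hxy => C.valid hxy
  -- sign vector
  let s : Fin v → ℝ := fun x => if col x = 0 then 1 else -1
  have hs1 : ∀ x, s x * s x = 1 := by
    intro x; by_cases h : col x = 0 <;> simp [s, h]
  have hfin2 : ∀ p q r : Fin 2, p ≠ r → q ≠ r → p = q := by decide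
  have hscol : ∀ x y : Fin v, col x = col y → s x = s y := by
    intro x y h; simp only [s, h]
  have hsadj : ∀ x y : Fin v, G.Adj x y → s y = -s x := by
    intro x y hxy
    have h := hcol hxy
    by_cases hx : col x = 0
    · have hy : col y ≠ 0 := fun hy0 => h (hx.trans hy0.symm)
      simp [s, hx, hy]
    · have hy : col y = 0 := hfin2 (col y) 0 (col x) (fun hyx => h hyx.symm) (fun h0 => hx h0.symm)
      simp [s, hx, hy]
  have hsA : ∀ i j, A i j ≠ 0 → s j = -s i := by
    intro i j hij
    apply hsadj
    by_contra hadj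
    exact hij (by simp [hAdef, SimpleGraph.adjMatrix_apply, hadj])
  have hspm : ∀ x, s x = 1 ∨ s x = -1 := by
    intro x; by_cases h : col x = 0 <;> simp [s, h]
  have hsne : ∀ x, s x ≠ 0 := by
    intro x; rcases hspm x with h | h <;> rw [h] <;> norm_num
  -- counting from the indubitable partition, in Finset form
  have hcount : ∀ (i : Fin (m+1)) (x : Fin v),
      (Finset.univ.filter fun y => G.Adj x y ∧ c y = i).card = if c x = i then a else b := by
    intro i x
    have h := hcnt i x
    rw [show {y : Fin v | G.Adj x y ∧ c y = i}
        = ↑(Finset.univ.filter fun y => G.Adj x y ∧ c y = i) by ext y; simp,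
      Set.ncard_coe_finset] at h
    convert h
  -- basic vertices
  have hne : Nonempty (Fin v) := hconn.nonempty
  have h01 : (0 : Fin (m+1)) ≠ 1 := by
    have : (1 : Fin (m+1)).val = 1 := by
      simp [Fin.val_one, Nat.mod_eq_of_lt (by omega : 1 < m + 1)]
    intro h
    rw [Fin.ext_iff, this] at h
    simp at h
  obtain ⟨x₀, hx₀⟩ := hcsurj 0
  obtain ⟨x₁, hx₁⟩ := hcsurj 1
  have hx01 : x₀ ≠ x₁ := fun h => h01 (by rw [← hx₀, ← hx₁, h])
  -- k ≥ 1
  have hk1 : 1 ≤ k := by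
    obtain ⟨w⟩ := hconn x₀ x₁
    cases w with
    | nil => exact absurd rfl hx01
    | cons hadj _ =>
      have := (G.degree_pos_iff_exists_adj x₀).mpr ⟨_, hadj⟩
      rw [hreg x₀] at this
      omega
  -- k = a + m * b
  have hksum : k = a + m * b := by
    have hfib := Finset.card_eq_sum_card_fiberwise
      (f := c) (s := G.neighborFinset x₀) (t := Finset.univ)
      (fun x _ => Finset.mem_univ (c x))
    rw [show #(G.neighborFinset x₀) = k from hreg x₀] at hfib
    have heach : ∀ i : Fin (m+1),
        ((G.neighborFinset x₀).filter fun y => c y = i).card = if c x₀ = i then a else b := by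
      intro i
      rw [← hcount i x₀]
      congr 1
      ext y
      simp [G.mem_neighborFinset, and_assoc]
    rw [Finset.sum_congr rfl (fun i _ => heach i)] at hfib
    rw [← Finset.add_sum_erase Finset.univ _ (Finset.mem_univ (c x₀))] at hfib
    simp only [if_pos rfl] at hfib
    have herase : ∑ i ∈ Finset.univ.erase (c x₀), (if c x₀ = i then a else b) = m * b := by
      rw [Finset.sum_congr rfl (fun i hi => if_neg (fun h => (Finset.mem_erase.mp hi).1 h.symm))]
      rw [Finset.sum_const, Finset.card_erase_of_mem (Finset.mem_univ _), Finset.card_univ,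
        Fintype.card_fin, smul_eq_mul]
      simp
    rw [herase] at hfib
    exact hfib
  -- b ≥ 1
  have hb1 : 1 ≤ b := by
    by_contra hb
    have hb0 : b = 0 := by omega
    have hadjc : ∀ x y : Fin v, G.Adj x y → c x = c y := by
      intro x y hxy
      by_contra hcc
      have h := hcount (c y) x
      rw [if_neg hcc, hb0] at h
      have : y ∈ Finset.univ.filter fun z => G.Adj x z ∧ c z = c y := by
        simp [hxy]
      rw [Finset.card_eq_zero] at h
      rw [h] at this
      exact absurd this (Finset.notMem_empty y)
    have : c x₀ = c x₁ :=
      reachable_pres G (fun z => c x₀ = c z) (fun x y hxy h => h.trans (hadjc x y hxy))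
        (hconn x₀ x₁) rfl
    rw [hx₀, hx₁] at this
    exact h01 this
  -- lam ≠ k
  have hlamk : lam ≠ (k : ℝ) := by
    intro h
    have : (a : ℝ) - b = (a : ℝ) + m * b := by
      rw [hab, h, hksum]; push_cast; ring
    have : (m : ℝ) * b + b = 0 := by linarith
    have hbpos : (0:ℝ) < b := by exact_mod_cast hb1
    have hmpos : (0:ℝ) ≤ m := by positivity
    nlinarith
  -- eigenvalue memberships
  have honev : (fun _ => (1:ℝ) : Fin v → ℝ) ≠ 0 := by
    intro h
    have := congrFun h (Classical.arbitrary (Fin v))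
    norm_num at this
  have hkpos : 0 < eigMult A (k : ℝ) :=
    eigMult_pos_of_eigvec A honev (adjMatrix_mulVec_one G hreg)
  have hsymmult : ∀ μ : ℝ, eigMult A (-μ) = eigMult A μ := fun μ =>
    eigMult_neg_eq A s hs1 hsA μ
  have hnegkpos : 0 < eigMult A (-(k:ℝ)) := by rw [hsymmult]; exact hkpos
  have hlampos : 0 < eigMult A lam := by rw [hm]; exact hm0
  have hneglam : eigMult A (-lam) = m := by rw [hsymmult, hm]
  have hneglampos : 0 < eigMult A (-lam) := by rw [hneglam]; exact hm0
  -- the finset of eigenvalues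
  set ES : Finset ℝ := Finset.image hA.eigenvalues Finset.univ with hES
  have hsetcoe : {mu : ℝ | 0 < eigMult A mu} = ↑ES := eig_set_eq A hA
  have hEScard : ES.card = 4 := by
    rw [← Set.ncard_coe_finset, ← hsetcoe, h4]
  have hmemES : ∀ μ : ℝ, 0 < eigMult A μ → μ ∈ ES := by
    intro μ hμ
    have : μ ∈ {mu : ℝ | 0 < eigMult A mu} := hμ
    rwa [hsetcoe] at this
  -- lam ≠ 0
  have hkne0 : (k : ℝ) ≠ 0 := by
    simp only [ne_eq, Nat.cast_eq_zero]; omega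
  have hknegk : (k : ℝ) ≠ -(k : ℝ) := by
    intro h
    have : (2:ℝ) * k = 0 := by linarith
    simp [hkne0] at this
  have hlam0 : lam ≠ 0 := by
    intro hl0
    -- T3 = {k, -k, 0} ⊆ ES, and there is a fourth μ, then -μ gives a fifth element
    have hT3 : ({(k:ℝ), -(k:ℝ), 0} : Finset ℝ) ⊆ ES := by
      intro μ hμ
      simp only [Finset.mem_insert, Finset.mem_singleton] at hμ
      rcases hμ with rfl | rfl | rfl
      · exact hmemES _ hkpos
      · exact hmemES _ hnegkpos
      · exact hmemES _ (hl0 ▸ hlampos)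
    have hT3card : ({(k:ℝ), -(k:ℝ), 0} : Finset ℝ).card = 3 := by
      rw [Finset.card_insert_of_notMem (by simp [hknegk, hkne0]),
        Finset.card_insert_of_notMem (by simp; intro h; exact hkne0 (by linarith)),
        Finset.card_singleton]
    have hssub : ({(k:ℝ), -(k:ℝ), 0} : Finset ℝ) ⊂ ES := by
      rw [Finset.ssubset_iff_subset_ne]
      refine ⟨hT3, fun h => ?_⟩
      rw [← h, hT3card] at hEScard
      omega
    obtain ⟨μ, hμES, hμT3⟩ := Finset.exists_of_ssubset hssub
    simp only [Finset.mem_insert, Finset.mem_singleton, not_or] at hμT3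
    obtain ⟨hμk, hμnk, hμ0⟩ := hμT3
    have hμpos : 0 < eigMult A μ := by
      have : μ ∈ {mu : ℝ | 0 < eigMult A mu} := by rw [hsetcoe]; exact hμES
      exact this
    have hnμpos : 0 < eigMult A (-μ) := by rw [hsymmult]; exact hμpos
    have hnμES : -μ ∈ ES := hmemES _ hnμpos
    have h5 : ({μ, -μ, (k:ℝ), -(k:ℝ), 0} : Finset ℝ) ⊆ ES := by
      intro x hx
      simp only [Finset.mem_insert, Finset.mem_singleton] at hx
      rcases hx with rfl | rfl | rfl | rfl | rfl
      · exact hμES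
      · exact hnμES
      · exact hmemES _ hkpos
      · exact hmemES _ hnegkpos
      · exact hmemES _ (hl0 ▸ hlampos)
    have h5card : ({μ, -μ, (k:ℝ), -(k:ℝ), 0} : Finset ℝ).card = 5 := by
      have hnμμ : -μ ≠ μ := fun h => hμ0 (by linarith)
      have hnμk : -μ ≠ (k:ℝ) := fun h => hμnk (by linarith)
      have hnμnk : -μ ≠ -(k:ℝ) := fun h => hμk (by linarith)
      have hnμ0 : -μ ≠ 0 := fun h => hμ0 (by linarith)
      rw [Finset.card_insert_of_notMem (by simp [hμk, hμnk, hμ0]; intro h; exact hnμμ h.symm),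
        Finset.card_insert_of_notMem (by simp [hnμk, hnμnk, hnμ0]),
        hT3card]
    have := Finset.card_le_card h5
    rw [h5card, hEScard] at this
    omega
  -- distinctness of the four eigenvalues
  have hlamnegk : lam ≠ -(k:ℝ) := hlam
  have hneglamk : -lam ≠ (k:ℝ) := fun h => hlamnegk (by linarith)
  have hneglamnegk : -lam ≠ -(k:ℝ) := fun h => hlamk (by linarith)
  have hlamneglam : lam ≠ -lam := fun h => hlam0 (by linarith)
  -- ES is exactly the four values
  have hT4 : ({(k:ℝ), -(k:ℝ), lam, -lam} : Finset ℝ) ⊆ ES := by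
    intro μ hμ
    simp only [Finset.mem_insert, Finset.mem_singleton] at hμ
    rcases hμ with rfl | rfl | rfl | rfl
    · exact hmemES _ hkpos
    · exact hmemES _ hnegkpos
    · exact hmemES _ hlampos
    · exact hmemES _ hneglampos
  have hT4card : ({(k:ℝ), -(k:ℝ), lam, -lam} : Finset ℝ).card = 4 := by
    rw [Finset.card_insert_of_notMem (by
        simp only [Finset.mem_insert, Finset.mem_singleton, not_or]
        exact ⟨hknegk, fun h => hlamk h.symm, fun h => hneglamk h.symm⟩),
      Finset.card_insert_of_notMem (by
        simp only [Finset.mem_insert, Finset.mem_singleton, not_or]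
        exact ⟨fun h => hlamnegk h.symm, fun h => hneglamnegk h.symm⟩),
      Finset.card_insert_of_notMem (by
        simp only [Finset.mem_singleton]
        exact hlamneglam),
      Finset.card_singleton]
  have hESeq : ES = ({(k:ℝ), -(k:ℝ), lam, -lam} : Finset ℝ) :=
    (Finset.eq_of_subset_of_card_le hT4 (by rw [hEScard, hT4card])).symm
  -- Perron: top multiplicities are 1
  have hmultk : eigMult A (k : ℝ) = 1 := eigMult_top_eq_one G hconn hreg
  have hmultnegk : eigMult A (-(k : ℝ)) = 1 := by rw [hsymmult]; exact hmultk
  -- v = 2m + 2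
  have hv : v = 2 * m + 2 := by
    have hsum := card_eq_sum_eigMult A hA
    rw [Fintype.card_fin, ← hES, hESeq] at hsum
    rw [Finset.sum_insert (by
        simp only [Finset.mem_insert, Finset.mem_singleton, not_or]
        exact ⟨hknegk, fun h => hlamk h.symm, fun h => hneglamk h.symm⟩),
      Finset.sum_insert (by
        simp only [Finset.mem_insert, Finset.mem_singleton, not_or]
        exact ⟨fun h => hlamnegk h.symm, fun h => hneglamnegk h.symm⟩),
      Finset.sum_insert (by
        simp only [Finset.mem_singleton]
        exact hlamneglam),
      Finset.sum_singleton, hmultk, hmultnegk, hm, hneglam] at hsum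
    omega
  -- row and column sums
  have hAs : A *ᵥ s = (-(k:ℝ)) • s := by
    funext x
    rw [hAdef, SimpleGraph.adjMatrix_mulVec_apply]
    have : ∀ z ∈ G.neighborFinset x, s z = -s x := fun z hz =>
      hsadj x z ((G.mem_neighborFinset x z).mp hz)
    rw [Finset.sum_congr rfl this, Finset.sum_const,
      show #(G.neighborFinset x) = k from hreg x, nsmul_eq_mul]
    simp only [Pi.smul_apply, smul_eq_mul]
    ring
  have hrowsum : ∀ x, ∑ y, A x y = (k : ℝ) := by
    intro x
    have h1 := congrFun (adjMatrix_mulVec_one G hreg) x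
    rw [SimpleGraph.adjMatrix_mulVec_apply] at h1
    simp only [Pi.smul_apply, smul_eq_mul, mul_one] at h1
    have hnb : G.neighborFinset x = Finset.univ.filter (G.Adj x) := by
      ext z; simp [G.mem_neighborFinset]
    rw [hnb, Finset.sum_filter] at h1
    rw [← h1]
    exact Finset.sum_congr rfl fun y _ => by simp [hAdef, SimpleGraph.adjMatrix_apply]
  have hsymA : ∀ x y, A x y = A y x := by
    intro x y; simp [hAdef, SimpleGraph.adjMatrix_apply, G.adj_comm]
  have hcolsum : ∀ y, ∑ x, A x y = (k : ℝ) := by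
    intro y
    rw [Finset.sum_congr rfl fun x _ => hsymA x y, hrowsum y]
  have hcolsum_s : ∀ y, ∑ x, A x y * s x = -(k:ℝ) * s y := by
    intro y
    have := congrFun hAs y
    rw [Matrix.mulVec, dotProduct] at this
    rw [Finset.sum_congr rfl fun x _ => by rw [hsymA x y]]
    rw [this]
    simp
  -- total sign sum is zero
  have hsigma0 : ∑ x, s x = 0 := by
    have h1 : ∑ x, (A *ᵥ s) x = -(k:ℝ) * ∑ x, s x := by
      rw [hAs]
      simp only [Pi.smul_apply, smul_eq_mul]
      rw [← Finset.mul_sum]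
    have h2 : ∑ x, (A *ᵥ s) x = (k:ℝ) * ∑ x, s x := by
      have : ∀ x, (A *ᵥ s) x = ∑ y, A x y * s y := fun x => rfl
      rw [Finset.sum_congr rfl fun x _ => this x, Finset.sum_comm]
      rw [Finset.sum_congr rfl fun y _ => (Finset.sum_mul ..).symm]
      rw [Finset.sum_congr rfl fun y (_ : y ∈ Finset.univ) => by rw [hcolsum y]]
      rw [← Finset.mul_sum]
    have hk0 : (0:ℝ) < k := by exact_mod_cast hk1
    nlinarith [h1.symm.trans h2]
  -- indicator functions
  set χ : Fin (m+1) → Fin v → ℝ := fun i y => if c y = i then 1 else 0 with hχ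
  have hchi : ∀ i x, ∑ y, A x y * χ i y = if c x = i then (a:ℝ) else b := by
    intro i x
    have h1 : ∀ y, A x y * χ i y = if G.Adj x y ∧ c y = i then (1:ℝ) else 0 := by
      intro y
      by_cases hxy : G.Adj x y <;> by_cases hcy : c y = i <;>
        simp [hAdef, SimpleGraph.adjMatrix_apply, hχ, hxy, hcy]
    rw [Finset.sum_congr rfl fun y _ => h1 y, Finset.sum_boole, hcount i x]
    push_cast [apply_ite (Nat.cast : ℕ → ℝ)]
    rfl
  -- cell sign sums are zero
  have hsigmai : ∀ i, ∑ x, χ i x * s x = 0 := by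
    intro i
    have hD1 : ∑ x, s x * (∑ y, A x y * χ i y)
        = lam * (∑ x, χ i x * s x) + (b:ℝ) * ∑ x, s x := by
      rw [Finset.sum_congr rfl fun x _ => by rw [hchi i x]]
      have : ∀ x, s x * (if c x = i then (a:ℝ) else b) = lam * (χ i x * s x) + b * s x := by
        intro x
        by_cases hc : c x = i
        · simp only [hχ, if_pos hc]
          rw [← hab]; ring
        · simp only [hχ, if_neg hc]; ring
      rw [Finset.sum_congr rfl fun x _ => this x, Finset.sum_add_distrib,
        ← Finset.mul_sum, ← Finset.mul_sum]
      
    have hD2 : ∑ x, s x * (∑ y, A x y * χ i y)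
        = -(k:ℝ) * (∑ x, χ i x * s x) := by
      have hswap : ∑ x, s x * (∑ y, A x y * χ i y) = ∑ y, (∑ x, A x y * s x) * χ i y := by
        rw [Finset.sum_congr rfl fun x (_ : x ∈ Finset.univ) => by
          rw [Finset.mul_sum]]
        rw [Finset.sum_comm]
        congr 1
        funext y
        rw [Finset.sum_mul]
        congr 1
        funext x
        ring
      rw [hswap]
      calc ∑ y, (∑ x, A x y * s x) * χ i y
          = ∑ y, -(k:ℝ) * (χ i y * s y) := by
            refine Finset.sum_congr rfl fun y _ => ?_
            rw [hcolsum_s y]; ring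
        _ = -(k:ℝ) * ∑ y, χ i y * s y := by rw [← Finset.mul_sum]
    have := hD1.symm.trans hD2
    rw [hsigma0, mul_zero, add_zero] at this
    have hlk : lam + (k:ℝ) ≠ 0 := fun h => hlam (by linarith)
    have : (lam + (k:ℝ)) * (∑ x, χ i x * s x) = 0 := by linarith
    exact (mul_eq_zero.mp this).resolve_left hlk
  -- cells
  set P : Fin (m+1) → Finset (Fin v) := fun i => Finset.univ.filter fun x => c x = i with hP
  have hsigmaP : ∀ i, ∑ x ∈ P i, s x = 0 := by
    intro i
    have := hsigmai i
    rw [show ∑ x, χ i x * s x = ∑ x ∈ P i, s x by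
      rw [hP, Finset.sum_filter]
      exact Finset.sum_congr rfl fun x _ => by
        by_cases hc : c x = i <;> simp [hχ, hc]] at this
    exact this
  have hPmem : ∀ x, x ∈ P (c x) := fun x => by simp [hP]
  have hP2 : ∀ i, 2 ≤ (P i).card := by
    intro i
    obtain ⟨x, hx⟩ := hcsurj i
    have hxm : x ∈ P i := by simp [hP, hx]
    have hpos : 0 < (P i).card := Finset.card_pos.mpr ⟨x, hxm⟩
    by_contra h
    have h1 : (P i).card = 1 := by omega
    obtain ⟨z, hz⟩ := Finset.card_eq_one.mp h1
    have := hsigmaP i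
    rw [hz, Finset.sum_singleton] at this
    exact hsne z this
  have hPsum : ∑ i, (P i).card = v := by
    have := Finset.card_eq_sum_card_fiberwise
      (f := c) (s := Finset.univ) (t := Finset.univ) (fun x _ => Finset.mem_univ (c x))
    rw [Finset.card_univ, Fintype.card_fin] at this
    exact this.symm
  have hPcard : ∀ i, (P i).card = 2 := by
    intro i
    by_contra h
    have h3 : 3 ≤ (P i).card := by have := hP2 i; omega
    have hrest : 2 * m ≤ ∑ j ∈ Finset.univ.erase i, (P j).card := by
      calc 2 * m = (Finset.univ.erase i).card * 2 := by
            rw [Finset.card_erase_of_mem (Finset.mem_univ i), Finset.card_univ,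
              Fintype.card_fin]
            omega
        _ ≤ ∑ j ∈ Finset.univ.erase i, (P j).card := by
            rw [← smul_eq_mul, ← Finset.sum_const]
            exact Finset.sum_le_sum fun j _ => hP2 j
    have := hPsum
    rw [← Finset.add_sum_erase Finset.univ _ (Finset.mem_univ i)] at this
    omega
  -- same cell, same color implies equal
  have hsame : ∀ x y : Fin v, c x = c y → col x = col y → x = y := by
    intro x y hcxy hcolxy
    obtain ⟨u, w, huw, hPeq⟩ := Finset.card_eq_two.mp (hPcard (c x))
    have hσ := hsigmaP (c x)
    rw [hPeq, Finset.sum_pair huw] at hσ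
    have hcoluw : col u ≠ col w := by
      intro h
      have := hscol u w h
      rw [this] at hσ
      have : s w = 0 := by linarith
      exact hsne w this
    have hxm : x ∈ ({u, w} : Finset (Fin v)) := hPeq ▸ hPmem x
    have hym : y ∈ ({u, w} : Finset (Fin v)) := hPeq ▸ (by rw [hcxy]; exact hPmem y)
    simp only [Finset.mem_insert, Finset.mem_singleton] at hxm hym
    rcases hxm with rfl | rfl <;> rcases hym with rfl | rfl
    · rfl
    · exact absurd hcolxy hcoluw
    · exact absurd hcolxy.symm hcoluw
    · rfl
  -- fibers of the neighbor-count sets have at most one element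
  have huniq : ∀ (x : Fin v) (i : Fin (m+1)),
      (Finset.univ.filter fun y => G.Adj x y ∧ c y = i).card ≤ 1 := by
    intro x i
    apply Finset.card_le_one.mpr
    intro y hy y' hy'
    simp only [Finset.mem_filter, Finset.mem_univ, true_and] at hy hy'
    have hcy : col y ≠ col x := fun h => hcol hy.1 h.symm
    have hcy' : col y' ≠ col x := fun h => hcol hy'.1 h.symm
    exact hsame y y' (hy.2.trans hy'.2.symm) (hfin2 _ _ _ hcy hcy')
  have hbeq : b = 1 := by
    have h := hcount 1 x₀
    rw [hx₀, if_neg h01] at h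
    have := huniq x₀ 1
    rw [h] at this
    omega
  have haeq : a = 0 := by
    have ha1 : a ≤ 1 := by
      have h := hcount (c x₀) x₀
      rw [if_pos rfl] at h
      have := huniq x₀ (c x₀)
      rw [h] at this
      exact this
    interval_cases a
    · rfl
    · exfalso
      apply hlam0
      rw [← hab, hbeq]
      norm_num
  -- adjacency characterization
  have hadjc : ∀ x y : Fin v, G.Adj x y → c x ≠ c y := by
    intro x y hxy h
    have hc := hcount (c x) x
    rw [if_pos rfl, haeq, Finset.card_eq_zero] at hc
    have : y ∈ Finset.univ.filter fun z => G.Adj x z ∧ c z = c x := by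
      simp [hxy, h.symm]
    rw [hc] at this
    exact absurd this (Finset.notMem_empty y)
  have hadj_iff : ∀ x y : Fin v, G.Adj x y ↔ (col x ≠ col y ∧ c x ≠ c y) := by
    intro x y
    constructor
    · exact fun h => ⟨hcol h, hadjc x y h⟩
    · rintro ⟨h1, h2⟩
      have hc := hcount (c y) x
      rw [if_neg h2, hbeq, Finset.card_eq_one] at hc
      obtain ⟨z, hz⟩ := hc
      have hzm : z ∈ Finset.univ.filter fun w => G.Adj x w ∧ c w = c y := by
        rw [hz]; exact Finset.mem_singleton_self z
      simp only [Finset.mem_filter, Finset.mem_univ, true_and] at hzm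
      obtain ⟨hxz, hcz⟩ := hzm
      have hcolz : col z ≠ col x := fun h => hcol hxz h.symm
      have hcoly : col y ≠ col x := fun h => h1 h.symm
      have : z = y := hsame z y hcz (hfin2 _ _ _ hcolz hcoly)
      rwa [this] at hxz
  -- the bijection
  have hinj : Function.Injective (fun x : Fin v => ((col x, c x) : Fin 2 × Fin (m+1))) := by
    intro x y h
    rw [Prod.ext_iff] at h
    exact hsame x y h.2 h.1
  have hbij : Function.Bijective (fun x : Fin v => ((col x, c x) : Fin 2 × Fin (m+1))) := by
    rw [Fintype.bijective_iff_injective_and_card]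
    refine ⟨hinj, ?_⟩
    rw [Fintype.card_fin, Fintype.card_prod, Fintype.card_fin, Fintype.card_fin, hv]
    ring
  refine ⟨Equiv.ofBijective _ hbij, fun x y => ?_⟩
  show A x y = ((matJ (Fin 2) (Fin 2) - 1) ⊗ₖ (matJ (Fin (m + 1)) (Fin (m + 1)) - 1))
    (col x, c x) (col y, c y)
  rw [Matrix.kroneckerMap_apply]
  simp only [Matrix.sub_apply, Matrix.one_apply, matJ, Matrix.of_apply]
  by_cases h1 : col x = col y <;> by_cases h2 : c x = c y <;>
    simp [hAdef, SimpleGraph.adjMatrix_apply, hadj_iff, h1, h2]
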